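/- arXiv:1105.5187 — 5 statements merged into one kernel-verified Lean document; each statement's English description precedes it below -/
import Mathlib

section
/- Let R be a ring, M an R-bimodule, and σ : R⁴ → M a function satisfying the normalization σ(x,y,0,0) = σ(0,0,z,t) = σ(x,0,z,0) = σ(0,y,0,t) = σ(x,0,0,t) = 0 and the Mac Lane condition (M8): −σ(r,s,u,v) − σ(x,y,z,t) + σ(r+x,s+y,u+z,v+t) + σ(r,s,x,y) + σ(u,v,z,t) − σ(r+u,s+v,x+z,y+t) − σ(r,u,x,z) − σ(s,v,y,t) + σ(r+s,u+v,x+y,z+t) = 0 for all arguments. Define η(x,y) = σ(0,x,y,0). Then η(x,y) + η(y,x) = 0 for all x,y ∈ R. -/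
theorem stmt4 {R M : Type*} [Ring R] [AddCommGroup M]
    (σ : R → R → R → R → M)
    (hn1 : ∀ x y, σ x y 0 0 = 0) (hn2 : ∀ z t, σ 0 0 z t = 0)
    (hn3 : ∀ x z, σ x 0 z 0 = 0) (hn4 : ∀ y t, σ 0 y 0 t = 0) (hn5 : ∀ x t, σ x 0 0 t = 0)
    (hM8 : ∀ r s u v x y z t : R,
      -σ r s u v - σ x y z t + σ (r + x) (s + y) (u + z) (v + t)
        + σ r s x y + σ u v z t - σ (r + u) (s + v) (x + z) (y + t)
        - σ r u x z - σ s v y t + σ (r + s) (u + v) (x + y) (z + t) = 0)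
    (η : R → R → M) (hη : ∀ x y, η x y = σ 0 x y 0) :
    ∀ x y : R, η x y + η y x = 0 := by
  intro x y
  have h := hM8 0 0 y 0 0 x 0 0
  simp [hn1, hn2, hn3, hn4, hn5] at h
  simpa [hη] using h
end

section
/- Let R be a ring, M an abelian group, and σ : R⁴ → M a function satisfying the normalization σ(x,y,0,0) = σ(0,0,z,t) = σ(x,0,z,0) = σ(0,y,0,t) = σ(x,0,0,t) = 0 and condition (M8) (as in Mac Lane cohomology) for all arguments. Define ξ(x,y,z) = −σ(x,y,0,z) and η(x,y) = σ(0,x,y,0). Then (A2) holds: ξ(x,y,z) − ξ(x,z,y) + ξ(z,x,y) + η(x+y,z) − η(x,z) − η(y,z) = 0 for all x,y,z ∈ R. -/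
theorem stmt5 {R M : Type*} [Ring R] [AddCommGroup M]
    (σ : R → R → R → R → M)
    (hn1 : ∀ x y, σ x y 0 0 = 0) (hn2 : ∀ z t, σ 0 0 z t = 0)
    (hn3 : ∀ x z, σ x 0 z 0 = 0) (hn4 : ∀ y t, σ 0 y 0 t = 0) (hn5 : ∀ x t, σ x 0 0 t = 0)
    (hM8 : ∀ r s u v x y z t : R,
      -σ r s u v - σ x y z t + σ (r + x) (s + y) (u + z) (v + t)
        + σ r s x y + σ u v z t - σ (r + u) (s + v) (x + z) (y + t)
        - σ r u x z - σ s v y t + σ (r + s) (u + v) (x + y) (z + t) = 0)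
    (ξ : R → R → R → M) (hξ : ∀ x y z, ξ x y z = -σ x y 0 z)
    (η : R → R → M) (hη : ∀ x y, η x y = σ 0 x y 0) :
    ∀ x y z : R,
      ξ x y z - ξ x z y + ξ z x y + η (x + y) z - η x z - η y z = 0 := by
  intro x y z
  have h1 := hM8 0 0 0 y 0 z x 0
  have h2 := hM8 0 0 0 y x z 0 0
  have h3 := hM8 0 0 0 y z x 0 0
  have h4 := hM8 0 0 x 0 0 z 0 0
  have h5 := hM8 0 0 x y 0 z 0 0
  simp only [hξ, hη, add_zero, zero_add, hn1, hn2, hn3, hn4, hn5] at *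
  linear_combination (norm := abel) -h1 + h2 - h3 - h4 + h5
end

section
/- Let R be a ring, M an abelian group, and σ : R⁴ → M normalized (σ(x,y,0,0) = σ(0,0,z,t) = σ(x,0,z,0) = σ(0,y,0,t) = σ(x,0,0,t) = 0) and satisfying (M8) for all arguments. Define ξ(x,y,z) = −σ(x,y,0,z) and η(x,y) = σ(0,x,y,0). Then (A1) holds: ξ(y,z,t) − ξ(x+y,z,t) + ξ(x,y+z,t) − ξ(x,y,z+t) + ξ(x,y,z) = 0 for all x,y,z,t ∈ R. -/
theorem stmt6 {R M : Type*} [Ring R] [AddCommGroup M]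
    (σ : R → R → R → R → M)
    (hn1 : ∀ x y, σ x y 0 0 = 0) (hn2 : ∀ z t, σ 0 0 z t = 0)
    (hn3 : ∀ x z, σ x 0 z 0 = 0) (hn4 : ∀ y t, σ 0 y 0 t = 0) (hn5 : ∀ x t, σ x 0 0 t = 0)
    (hM8 : ∀ r s u v x y z t : R,
      -σ r s u v - σ x y z t + σ (r + x) (s + y) (u + z) (v + t)
        + σ r s x y + σ u v z t - σ (r + u) (s + v) (x + z) (y + t)
        - σ r u x z - σ s v y t + σ (r + s) (u + v) (x + y) (z + t) = 0)
    (ξ : R → R → R → M) (hξ : ∀ x y z, ξ x y z = -σ x y 0 z)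
    (η : R → R → M) (hη : ∀ x y, η x y = σ 0 x y 0) :
    ∀ x y z t : R,
      ξ y z t - ξ (x + y) z t + ξ x (y + z) t - ξ x y (z + t) + ξ x y z = 0 := by
  intro x y z t
  have h := hM8 x y 0 z 0 0 0 t
  simp only [add_zero, zero_add, hn1, hn2, hn3, hn4, hn5, hξ] at h ⊢
  abel_nf at h ⊢
  exact h
end

section
/- Let R be a ring, M an abelian group, and σ : R⁴ → M normalized (σ(x,y,0,0) = σ(0,0,z,t) = σ(x,0,z,0) = σ(0,y,0,t) = σ(x,0,0,t) = 0) satisfying (M8) for all arguments. Define ξ(x,y,z) = −σ(x,y,0,z) and η(x,y) = σ(0,x,y,0). Then σ is recovered by the formula σ(r,s,u,t) = ξ(r+s,u,t) − ξ(r,s,u) + η(s,u) + ξ(r,u,s) − ξ(r+u,s,t) for all r,s,u,t ∈ R. -/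
theorem stmt7 {R M : Type*} [Ring R] [AddCommGroup M]
    (σ : R → R → R → R → M)
    (hn1 : ∀ x y, σ x y 0 0 = 0) (hn2 : ∀ z t, σ 0 0 z t = 0)
    (hn3 : ∀ x z, σ x 0 z 0 = 0) (hn4 : ∀ y t, σ 0 y 0 t = 0) (hn5 : ∀ x t, σ x 0 0 t = 0)
    (hM8 : ∀ r s u v x y z t : R,
      -σ r s u v - σ x y z t + σ (r + x) (s + y) (u + z) (v + t)
        + σ r s x y + σ u v z t - σ (r + u) (s + v) (x + z) (y + t)
        - σ r u x z - σ s v y t + σ (r + s) (u + v) (x + y) (z + t) = 0)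
    (ξ : R → R → R → M) (hξ : ∀ x y z, ξ x y z = -σ x y 0 z)
    (η : R → R → M) (hη : ∀ x y, η x y = σ 0 x y 0) :
    ∀ r s u t : R,
      σ r s u t = ξ (r + s) u t - ξ r s u + η s u + ξ r u s - ξ (r + u) s t := by
  intro r s u t
  have h1 := hM8 r s u 0 0 0 0 t
  have h2 := hM8 r 0 0 s 0 u 0 0
  simp only [add_zero, zero_add, hn1, hn2, hn3, hn4, hn5, neg_zero, sub_zero] at h1 h2
  rw [hξ, hξ, hξ, hξ, hη]
  linear_combination (norm := abel1) h1 + h2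
end

section
/- Let R be a ring, M an R-bimodule, and ρ : R³ → M a function with normalization ρ(0,y,z) = ρ(x,0,z) = ρ(x,y,0) = 0 satisfying (M7): −ρ(x,y,r) − ρ(z,t,r) + ρ(x+z,y+t,r) + ρ(x,z,r) + ρ(y,t,r) − ρ(x+y,z+t,r) − σ(xr,yr,zr,tr) + σ(x,y,z,t)·r = 0 for all arguments, where σ : R⁴ → M. Define η(x,y) = σ(0,x,y,0). Then (A5) holds: η(x,y)·r − η(xr,yr) = ρ(x,y,r) − ρ(y,x,r) for all x,y,r ∈ R. -/
theorem stmt9 {R M : Type*} [Ring R] [AddCommGroup M] [Module Rᵐᵒᵖ M]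
    (ρ : R → R → R → M) (σ : R → R → R → R → M)
    (hr1 : ∀ y z, ρ 0 y z = 0) (hr2 : ∀ x z, ρ x 0 z = 0) (hr3 : ∀ x y, ρ x y 0 = 0)
    (hM7 : ∀ x y z t r : R,
      -ρ x y r - ρ z t r + ρ (x + z) (y + t) r + ρ x z r + ρ y t r
        - ρ (x + y) (z + t) r - σ (x * r) (y * r) (z * r) (t * r)
        + MulOpposite.op r • σ x y z t = 0)
    (η : R → R → M) (hη : ∀ x y, η x y = σ 0 x y 0) :
    ∀ x y r : R,
      MulOpposite.op r • η x y - η (x * r) (y * r) = ρ x y r - ρ y x r := by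
  intro x y r
  have h := hM7 0 x y 0 r
  simp only [zero_mul, mul_zero, zero_add, add_zero, hr1, hr2] at h
  rw [hη, hη]
  linear_combination (norm := abel) h
end
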